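/- arXiv:2509.15698 — 5 statements merged into one kernel-verified Lean document; each statement's English description precedes it below -/
import Mathlib

section
/- Let d, m be positive integers, b : ℝ^d → ℝ^d, σ : ℝ^d → ℝ^(d×m), and g : ℝ^d → ℝ (representing x ↦ ∫_Z |γ(x,z)|² ν(dz)) with g ≥ 0. Assume the coercivity condition: for all x, 2⟨x, b(x)⟩ + ‖σ(x)‖² + g(x) ≤ L₂ − L₃|x|², where L₂, L₃ > 0. Let θ ∈ (1/2, 1], α₁ ≥ 0, and τ ∈ (0,1) satisfy 2α₁ ≤ L₃ and 2α₁θ²τ ≤ 2θ − 1. Then for all x ∈ ℝ^d: |x + (1−θ)τ b(x)|² + τ(‖σ(x)‖² + g(x)) ≤ (1 − α₁τ)|x − θτ b(x)|² + L₂τ. -/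
theorem stmt_0 (d m : ℕ) (hd : 0 < d) (hm : 0 < m)
    (b : EuclideanSpace ℝ (Fin d) → EuclideanSpace ℝ (Fin d))
    (σ : EuclideanSpace ℝ (Fin d) → EuclideanSpace ℝ (Fin d × Fin m))
    (g : EuclideanSpace ℝ (Fin d) → ℝ) (hg : ∀ x, 0 ≤ g x)
    (L₂ L₃ : ℝ) (hL₂ : 0 < L₂) (hL₃ : 0 < L₃)
    (hcoe : ∀ x, 2 * (inner ℝ x (b x) : ℝ) + ‖σ x‖ ^ 2 + g x ≤ L₂ - L₃ * ‖x‖ ^ 2)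
    (θ α₁ τ : ℝ) (hθ : θ ∈ Set.Ioc (1 / 2 : ℝ) 1) (hα : 0 ≤ α₁)
    (hτ : τ ∈ Set.Ioo (0 : ℝ) 1) (h1 : 2 * α₁ ≤ L₃)
    (h2 : 2 * α₁ * θ ^ 2 * τ ≤ 2 * θ - 1) :
    ∀ x : EuclideanSpace ℝ (Fin d),
      ‖x + ((1 - θ) * τ) • b x‖ ^ 2 + τ * (‖σ x‖ ^ 2 + g x)
        ≤ (1 - α₁ * τ) * ‖x - (θ * τ) • b x‖ ^ 2 + L₂ * τ := by
  intro x
  have expand_add : ∀ c : ℝ, ‖x + c • b x‖ ^ 2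
      = ‖x‖ ^ 2 + 2 * c * (inner ℝ x (b x) : ℝ) + c ^ 2 * ‖b x‖ ^ 2 := by
    intro c
    rw [norm_add_sq_real, real_inner_smul_right, norm_smul]
    simp [Real.norm_eq_abs, mul_pow, sq_abs]
    ring
  have expand_sub : ‖x - (θ * τ) • b x‖ ^ 2
      = ‖x‖ ^ 2 - 2 * (θ * τ) * (inner ℝ x (b x) : ℝ) + (θ * τ) ^ 2 * ‖b x‖ ^ 2 := by
    rw [norm_sub_sq_real, real_inner_smul_right, norm_smul]
    simp [Real.norm_eq_abs, mul_pow, sq_abs]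
    ring
  have hc := hcoe x
  have hsq : 0 ≤ ‖x + (θ * τ) • b x‖ ^ 2 := sq_nonneg _
  rw [expand_add (θ * τ)] at hsq
  rw [expand_add ((1 - θ) * τ), expand_sub]
  obtain ⟨hθ1, hθ2⟩ := hθ
  obtain ⟨hτ1, hτ2⟩ := hτ
  nlinarith [sq_nonneg ‖x‖, sq_nonneg ‖b x‖, sq_nonneg τ, mul_pos hτ1 hτ1,
    mul_nonneg hα hτ1.le,
    mul_nonneg (mul_nonneg (sub_nonneg.2 h1) hτ1.le) (sq_nonneg ‖x‖),
    mul_nonneg (mul_nonneg (sub_nonneg.2 h2) (mul_pos hτ1 hτ1).le) (sq_nonneg ‖b x‖),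
    mul_nonneg (mul_nonneg hα hτ1.le) hsq,
    mul_le_mul_of_nonneg_left hc hτ1.le]
end

section
/- Let b : ℝ^d → ℝ^d, σ : ℝ^d → ℝ^(d×m), g : ℝ^d → ℝ nonnegative, and suppose 2⟨x, b(x)⟩ + ‖σ(x)‖² + g(x) ≤ L₂ − L₃|x|² for all x, with L₂, L₃ > 0. Let θ ∈ (1/2, 1] and τ ∈ (0,1). Define V_θ(x) := |x − θτ b(x)|². Then for all x ∈ ℝ^d: V_θ(x) ≥ (1 + θL₃τ)|x|² − L₂θτ. In particular V_θ(x) → ∞ as |x| → ∞. -/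
theorem stmt_1 (d m : ℕ)
    (b : EuclideanSpace ℝ (Fin d) → EuclideanSpace ℝ (Fin d))
    (σ : EuclideanSpace ℝ (Fin d) → EuclideanSpace ℝ (Fin d × Fin m))
    (g : EuclideanSpace ℝ (Fin d) → ℝ) (hg : ∀ x, 0 ≤ g x)
    (L₂ L₃ : ℝ) (hL₂ : 0 < L₂) (hL₃ : 0 < L₃)
    (hcoe : ∀ x, 2 * (inner ℝ x (b x) : ℝ) + ‖σ x‖ ^ 2 + g x ≤ L₂ - L₃ * ‖x‖ ^ 2)
    (θ τ : ℝ) (hθ : θ ∈ Set.Ioc (1 / 2 : ℝ) 1) (hτ : τ ∈ Set.Ioo (0 : ℝ) 1) :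
    (∀ x : EuclideanSpace ℝ (Fin d),
      ‖x - (θ * τ) • b x‖ ^ 2 ≥ (1 + θ * L₃ * τ) * ‖x‖ ^ 2 - L₂ * θ * τ) ∧
    Filter.Tendsto (fun x : EuclideanSpace ℝ (Fin d) => ‖x - (θ * τ) • b x‖ ^ 2)
      (Filter.comap (fun x => ‖x‖) Filter.atTop) Filter.atTop := by
  obtain ⟨hθ1, hθ2⟩ := hθ
  obtain ⟨hτ1, hτ2⟩ := hτ
  have hθ0 : 0 < θ := lt_trans (by norm_num) hθ1
  have key : ∀ x : EuclideanSpace ℝ (Fin d),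
      ‖x - (θ * τ) • b x‖ ^ 2 ≥ (1 + θ * L₃ * τ) * ‖x‖ ^ 2 - L₂ * θ * τ := by
    intro x
    have h := hcoe x
    have hib : (2 : ℝ) * inner ℝ x (b x) ≤ L₂ - L₃ * ‖x‖ ^ 2 := by
      nlinarith [hg x, sq_nonneg ‖σ x‖]
    have hexp : ‖x - (θ * τ) • b x‖ ^ 2 =
        ‖x‖ ^ 2 - 2 * (θ * τ) * inner ℝ x (b x) + (θ * τ) ^ 2 * ‖b x‖ ^ 2 := by
      rw [norm_sub_sq_real, real_inner_smul_right, norm_smul]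
      simp [mul_pow, abs_of_pos (mul_pos hθ0 hτ1)]
      ring
    rw [hexp]
    nlinarith [sq_nonneg ‖b x‖, mul_pos hθ0 hτ1]
  refine ⟨key, ?_⟩
  have hc : 0 < 1 + θ * L₃ * τ := by positivity
  have h1 : Filter.Tendsto (fun x : EuclideanSpace ℝ (Fin d) => ‖x‖)
      (Filter.comap (fun x => ‖x‖) Filter.atTop) Filter.atTop := Filter.tendsto_comap
  have h2 : Filter.Tendsto (fun x : EuclideanSpace ℝ (Fin d) =>
      (1 + θ * L₃ * τ) * ‖x‖ ^ 2 - L₂ * θ * τ)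
      (Filter.comap (fun x => ‖x‖) Filter.atTop) Filter.atTop := by
    have hsq : Filter.Tendsto (fun x : EuclideanSpace ℝ (Fin d) => ‖x‖ ^ 2)
        (Filter.comap (fun x => ‖x‖) Filter.atTop) Filter.atTop := by
      have := h1.atTop_mul_atTop₀ h1
      exact this.congr (fun x => (sq ‖x‖).symm)
    exact Filter.tendsto_atTop_add_const_right _ _ (hsq.const_mul_atTop hc)
  exact Filter.tendsto_atTop_mono key h2
end

section
/- Let E, B ∈ ℝ^d, θ ∈ (1/2, 1], L₁* > 0, τ ∈ (0,1) with L₁*θ²τ ≤ 3 − 2θ, and suppose 2⟨E, B⟩ + s + c ≤ −L₁*|E|² for some s, c ≥ 0. Then |E − θτ B|² + (1 − 2θ)τ²|B|² + τ(2⟨E, B⟩ + s + c) ≤ (1 − (θ − 1/2)L₁*τ)|E − θτ B|². -/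
theorem stmt_3 (d : ℕ) (E B : EuclideanSpace ℝ (Fin d))
    (s c L₁' θ τ : ℝ) (hs : 0 ≤ s) (hc : 0 ≤ c) (hL : 0 < L₁')
    (hθ : θ ∈ Set.Ioc (1 / 2 : ℝ) 1) (hτ : τ ∈ Set.Ioo (0 : ℝ) 1)
    (hsmall : L₁' * θ ^ 2 * τ ≤ 3 - 2 * θ)
    (hdis : 2 * (inner ℝ E B : ℝ) + s + c ≤ -L₁' * ‖E‖ ^ 2) :
    ‖E - (θ * τ) • B‖ ^ 2 + (1 - 2 * θ) * τ ^ 2 * ‖B‖ ^ 2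
        + τ * (2 * (inner ℝ E B : ℝ) + s + c)
      ≤ (1 - (θ - 1 / 2) * L₁' * τ) * ‖E - (θ * τ) • B‖ ^ 2 := by
  obtain ⟨hθ1, hθ2⟩ := hθ
  obtain ⟨hτ1, hτ2⟩ := hτ
  set p : ℝ := (inner ℝ E B : ℝ) with hp
  have h3 : (0:ℝ) < 3 - 2 * θ := by linarith
  have hN : ‖E - (θ * τ) • B‖ ^ 2
      = ‖E‖ ^ 2 - 2 * (θ * τ) * p + (θ * τ) ^ 2 * ‖B‖ ^ 2 := by
    rw [norm_sub_sq_real, real_inner_smul_right, norm_smul]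
    rw [mul_pow, Real.norm_eq_abs, sq_abs]
    ring
  have hQ : (0:ℝ) ≤ (3 - 2*θ)^2 * ‖E‖^2
      + 2 * (3 - 2*θ) * ((2*θ - 1) * θ * τ) * p
      + ((2*θ - 1) * θ * τ)^2 * ‖B‖^2 := by
    have h := sq_nonneg (‖(3 - 2*θ) • E + ((2*θ - 1) * θ * τ) • B‖)
    rw [norm_add_sq_real, real_inner_smul_left, real_inner_smul_right,
      norm_smul, norm_smul, mul_pow, mul_pow, Real.norm_eq_abs, Real.norm_eq_abs, sq_abs, sq_abs] at h
    calc (0:ℝ) ≤ (3 - 2*θ)^2 * ‖E‖^2 + 2 * ((3 - 2*θ) * (((2*θ - 1) * θ * τ) * p))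
        + ((2*θ - 1) * θ * τ)^2 * ‖B‖^2 := h
      _ = _ := by ring
  -- multiplied dissipativity
  have H1 : 2 * (3 - 2*θ) * τ * (2 * p + s + c)
      ≤ 2 * (3 - 2*θ) * τ * (-L₁' * ‖E‖^2) := by
    apply mul_le_mul_of_nonneg_left hdis
    positivity
  have H2 : (0:ℝ) ≤ L₁' * τ * ((3 - 2*θ)^2 * ‖E‖^2
      + 2 * (3 - 2*θ) * ((2*θ - 1) * θ * τ) * p
      + ((2*θ - 1) * θ * τ)^2 * ‖B‖^2) := by
    apply mul_nonneg (by positivity) hQ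
  have H3 : (0:ℝ) ≤ 2 * τ^2 * (2*θ - 1) * ((3 - 2*θ) - L₁' * θ^2 * τ) * ‖B‖^2 := by
    have : (0:ℝ) ≤ (3 - 2*θ) - L₁' * θ^2 * τ := by linarith
    have h21 : (0:ℝ) ≤ 2*θ - 1 := by linarith
    positivity
  rw [hN]
  nlinarith [H1, H2, H3, h3, sq_nonneg ‖B‖, sq_nonneg ‖E‖]
end

section
/- Let m : [h, ∞) → [0, ∞) and n : [h, ∞) → [0, ∞) be nonnegative continuous functions, h ∈ ℝ, and c > 0. If m(t) − m(s) ≤ −c ∫_s^t m(u) du + ∫_s^t n(u) du for all h ≤ s ≤ t < ∞, then m(t) ≤ m(h) + ∫_h^t e^{−c(t−u)} n(u) du for all t ≥ h. -/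
open intervalIntegral MeasureTheory Set Real

theorem stmt_6 (h : ℝ) (m n : ℝ → ℝ) (c : ℝ) (hc : 0 < c)
    (hmcont : ContinuousOn m (Set.Ici h)) (hncont : ContinuousOn n (Set.Ici h))
    (hm0 : ∀ t, h ≤ t → 0 ≤ m t) (hn0 : ∀ t, h ≤ t → 0 ≤ n t)
    (hineq : ∀ s t, h ≤ s → s ≤ t →
      m t - m s ≤ -c * (∫ u in s..t, m u) + ∫ u in s..t, n u) :
    ∀ t, h ≤ t → m t ≤ m h + ∫ u in h..t, Real.exp (-c * (t - u)) * n u := by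
  intro t ht
  rcases eq_or_lt_of_le ht with rfl | hlt
  · simp
  have hc0 : c ≠ 0 := ne_of_gt hc
  have hsub : ∀ a b : ℝ, h ≤ a → h ≤ b → Set.uIcc a b ⊆ Set.Ici h := by
    intro a b ha hb x hx
    rcases Set.mem_uIcc.mp hx with ⟨h1, _⟩ | ⟨h1, _⟩
    · exact le_trans ha h1
    · exact le_trans hb h1
  have hIccsub : Set.Icc h t ⊆ Set.Ici h := fun x hx => hx.1
  have hmI : ∀ a b, h ≤ a → h ≤ b → IntervalIntegrable m volume a b :=
    fun a b ha hb => (hmcont.mono (hsub a b ha hb)).intervalIntegrable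
  have hnI : ∀ a b, h ≤ a → h ≤ b → IntervalIntegrable n volume a b :=
    fun a b ha hb => (hncont.mono (hsub a b ha hb)).intervalIntegrable
  set M : ℝ → ℝ := fun x => ∫ u in h..x, m u with hMdef
  set N : ℝ → ℝ := fun x => ∫ u in h..x, n u with hNdef
  have hM0 : M h = 0 := intervalIntegral.integral_same
  have hN0 : N h = 0 := intervalIntegral.integral_same
  -- monotonicity of F
  have hFle : ∀ s, h ≤ s → s ≤ t → m t + c * M t - N t ≤ m s + c * M s - N s := by
    intro s hs hst
    have h1 := hineq s t hs hst
    have h2 : M t - M s = ∫ u in s..t, m u :=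
      intervalIntegral.integral_interval_sub_left (hmI h t le_rfl ht) (hmI h s le_rfl hs)
    have h3 : N t - N s = ∫ u in s..t, n u :=
      intervalIntegral.integral_interval_sub_left (hnI h t le_rfl ht) (hnI h s le_rfl hs)
    rw [← h2, ← h3] at h1
    linarith
  -- continuity
  have huIcc : Set.uIcc h t = Set.Icc h t := Set.uIcc_of_le ht
  have hMc : ContinuousOn M (Set.Icc h t) := by
    have := intervalIntegral.continuousOn_primitive_interval
      (f := m) (μ := volume) (a := h) (b := t)
      (by rw [huIcc]; exact (hmcont.mono hIccsub).integrableOn_compact isCompact_Icc)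
    rwa [huIcc] at this
  have hNc : ContinuousOn N (Set.Icc h t) := by
    have := intervalIntegral.continuousOn_primitive_interval
      (f := n) (μ := volume) (a := h) (b := t)
      (by rw [huIcc]; exact (hncont.mono hIccsub).integrableOn_compact isCompact_Icc)
    rwa [huIcc] at this
  have hmc' : ContinuousOn m (Set.Icc h t) := hmcont.mono hIccsub
  have hnc' : ContinuousOn n (Set.Icc h t) := hncont.mono hIccsub
  have hFc : ContinuousOn (fun u => m u + c * M u - N u) (Set.Icc h t) :=
    (hmc'.add (hMc.const_smul c)).sub hNc
  -- derivatives of primitives at interior points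
  have hprim : ∀ (f : ℝ → ℝ), ContinuousOn f (Set.Ici h) →
      (∀ a b, h ≤ a → h ≤ b → IntervalIntegrable f volume a b) →
      ∀ u ∈ Set.Ioo h t, HasDerivAt (fun x => ∫ v in h..x, f v) (f u) u := by
    intro f hfc hfI u hu
    apply intervalIntegral.integral_hasDerivAt_right (hfI h u le_rfl hu.1.le)
    · exact (hfc.mono (Set.Ioi_subset_Ici le_rfl)).stronglyMeasurableAtFilter isOpen_Ioi u hu.1
    · exact (hfc.mono (Set.Ioi_subset_Ici le_rfl)).continuousAt (Ioi_mem_nhds hu.1)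
  -- FTC for H u = exp (c*u) * (c * M u - N u)
  set g : ℝ → ℝ := fun u => c * (Real.exp (c * u) * (m u + c * M u - N u))
      - Real.exp (c * u) * n u with hgdef
  have hgc : ContinuousOn g (Set.Icc h t) := by
    apply ContinuousOn.sub
    · exact ((Real.continuous_exp.comp (continuous_const.mul continuous_id)).continuousOn.mul
        hFc).const_smul c
    · exact (Real.continuous_exp.comp (continuous_const.mul continuous_id)).continuousOn.mul hnc'
  have hgint : IntervalIntegrable g volume h t := by
    rw [intervalIntegrable_iff_integrableOn_Icc_of_le ht]
    exact hgc.integrableOn_compact isCompact_Icc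
  have hderiv : ∀ u ∈ Set.Ioo h t,
      HasDerivAt (fun x => Real.exp (c * x) * (c * M x - N x)) (g u) u := by
    intro u hu
    have hMd : HasDerivAt M (m u) u := hprim m hmcont hmI u hu
    have hNd : HasDerivAt N (n u) u := hprim n hncont hnI u hu
    have he : HasDerivAt (fun x => Real.exp (c * x)) (c * Real.exp (c * u)) u := by
      simpa [mul_comm] using ((hasDerivAt_id u).const_mul c).exp
    have := he.mul ((hMd.const_mul c).sub hNd)
    refine this.congr_deriv ?_
    show c * Real.exp (c * u) * (c * M u - N u) + Real.exp (c * u) * (c * m u - n u) = c * (Real.exp (c * u) * (m u + c * M u - N u)) - Real.exp (c * u) * n u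
    ring
  have key : (∫ u in h..t, g u) = Real.exp (c * t) * (c * M t - N t) := by
    have hHc : ContinuousOn (fun x => Real.exp (c * x) * (c * M x - N x)) (Set.Icc h t) :=
      (Real.continuous_exp.comp (continuous_const.mul continuous_id)).continuousOn.mul
        ((hMc.const_smul c).sub hNc)
    have := intervalIntegral.integral_eq_sub_of_hasDeriv_right_of_le ht hHc
      (fun u hu => (hderiv u hu).hasDerivWithinAt) hgint
    rw [this, hM0, hN0]
    ring
  -- split integral of g
  have hIF : IntervalIntegrable (fun u => Real.exp (c * u) * (m u + c * M u - N u)) volume h t := by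
    rw [intervalIntegrable_iff_integrableOn_Icc_of_le ht]
    exact (((Real.continuous_exp.comp (continuous_const.mul continuous_id)).continuousOn.mul
      hFc)).integrableOn_compact isCompact_Icc
  have hIn : IntervalIntegrable (fun u => Real.exp (c * u) * n u) volume h t := by
    rw [intervalIntegrable_iff_integrableOn_Icc_of_le ht]
    exact ((Real.continuous_exp.comp (continuous_const.mul continuous_id)).continuousOn.mul
      hnc').integrableOn_compact isCompact_Icc
  have hsplit : (∫ u in h..t, g u)
      = c * (∫ u in h..t, Real.exp (c * u) * (m u + c * M u - N u))
        - ∫ u in h..t, Real.exp (c * u) * n u := by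
    rw [hgdef]
    rw [intervalIntegral.integral_sub (hIF.const_mul c) hIn, intervalIntegral.integral_const_mul]
  -- ∫ exp (c*u) du
  have hexpint : (∫ u in h..t, Real.exp (c * u)) = (Real.exp (c * t) - Real.exp (c * h)) / c := by
    have hd : ∀ u ∈ Set.uIcc h t, HasDerivAt (fun x => Real.exp (c * x) / c) (Real.exp (c * u)) u := by
      intro u _
      have he : HasDerivAt (fun x => Real.exp (c * x)) (c * Real.exp (c * u)) u := by
        simpa [mul_comm] using ((hasDerivAt_id u).const_mul c).exp
      have := he.div_const c
      exact this.congr_deriv (mul_div_cancel_left₀ _ hc0)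
    have := intervalIntegral.integral_eq_sub_of_hasDerivAt (fun u hu => hd u hu)
      (by rw [intervalIntegrable_iff_integrableOn_Icc_of_le ht]
          exact ((Real.continuous_exp.comp (continuous_const.mul continuous_id)).continuousOn).integrableOn_compact isCompact_Icc)
    rw [this]
    ring
  -- monotone comparison
  have hmono : (m t + c * M t - N t) * ((Real.exp (c * t) - Real.exp (c * h)) / c)
      ≤ ∫ u in h..t, Real.exp (c * u) * (m u + c * M u - N u) := by
    have h1 : (∫ u in h..t, Real.exp (c * u) * (m t + c * M t - N t))
        ≤ ∫ u in h..t, Real.exp (c * u) * (m u + c * M u - N u) := by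
      apply intervalIntegral.integral_mono_on ht _ hIF
      · intro u hu
        have := hFle u hu.1 hu.2
        exact mul_le_mul_of_nonneg_left this (Real.exp_nonneg _)
      · rw [intervalIntegrable_iff_integrableOn_Icc_of_le ht]
        exact (((Real.continuous_exp.comp (continuous_const.mul continuous_id)).continuousOn.mul
          continuousOn_const)).integrableOn_compact isCompact_Icc
    calc (m t + c * M t - N t) * ((Real.exp (c * t) - Real.exp (c * h)) / c)
        = ∫ u in h..t, Real.exp (c * u) * (m t + c * M t - N t) := by
          rw [intervalIntegral.integral_mul_const, hexpint]; ring
      _ ≤ _ := h1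
  -- main estimate
  have main : Real.exp (c * t) * m t
      ≤ Real.exp (c * h) * (m t + c * M t - N t) + ∫ u in h..t, Real.exp (c * u) * n u := by
    have e1 : Real.exp (c * t) * (c * M t - N t)
        = c * (∫ u in h..t, Real.exp (c * u) * (m u + c * M u - N u))
          - ∫ u in h..t, Real.exp (c * u) * n u := by rw [← key, hsplit]
    have e2 : (m t + c * M t - N t) * (Real.exp (c * t) - Real.exp (c * h))
        ≤ c * ∫ u in h..t, Real.exp (c * u) * (m u + c * M u - N u) := by
      have := mul_le_mul_of_nonneg_left hmono hc.le
      calc (m t + c * M t - N t) * (Real.exp (c * t) - Real.exp (c * h))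
          = c * ((m t + c * M t - N t) * ((Real.exp (c * t) - Real.exp (c * h)) / c)) := by
            field_simp
        _ ≤ _ := this
    nlinarith [e1, e2]
  -- conclude
  have hFt : m t + c * M t - N t ≤ m h := by
    have := hFle h le_rfl ht
    rw [hM0, hN0] at this
    linarith
  have hstep : Real.exp (c * h) * (m t + c * M t - N t) ≤ Real.exp (c * t) * m h := by
    rcases le_or_gt (m t + c * M t - N t) 0 with hF0 | hF0
    · have h1 : Real.exp (c * h) * (m t + c * M t - N t) ≤ 0 :=
        mul_nonpos_of_nonneg_of_nonpos (Real.exp_nonneg _) hF0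
      have h2 : 0 ≤ Real.exp (c * t) * m h :=
        mul_nonneg (Real.exp_nonneg _) (hm0 h le_rfl)
      linarith
    · have h1 : Real.exp (c * h) ≤ Real.exp (c * t) := by
        apply Real.exp_le_exp.mpr
        nlinarith
      calc Real.exp (c * h) * (m t + c * M t - N t) ≤ Real.exp (c * h) * m h :=
            mul_le_mul_of_nonneg_left hFt (Real.exp_nonneg _)
        _ ≤ Real.exp (c * t) * m h := mul_le_mul_of_nonneg_right h1 (hm0 h le_rfl)
  have hmain2 : Real.exp (c * t) * m t
      ≤ Real.exp (c * t) * m h + ∫ u in h..t, Real.exp (c * u) * n u := by linarith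
  have hInt_eq : (∫ u in h..t, Real.exp (-c * (t - u)) * n u)
      = Real.exp (-(c * t)) * ∫ u in h..t, Real.exp (c * u) * n u := by
    rw [← intervalIntegral.integral_const_mul]
    apply intervalIntegral.integral_congr
    intro u _
    show Real.exp (-c * (t - u)) * n u = Real.exp (-(c * t)) * (Real.exp (c * u) * n u)
    have harg : -c * (t - u) = -(c * t) + c * u := by ring
    rw [harg, Real.exp_add, mul_assoc]
  rw [hInt_eq]
  have hE : (0:ℝ) < Real.exp (c * t) := Real.exp_pos _
  rw [← mul_le_mul_iff_right₀ hE]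
  calc Real.exp (c * t) * m t
      ≤ Real.exp (c * t) * m h + ∫ u in h..t, Real.exp (c * u) * n u := hmain2
    _ = Real.exp (c * t) * (m h + Real.exp (-(c * t)) * ∫ u in h..t, Real.exp (c * u) * n u) := by
        rw [mul_add, ← mul_assoc, ← Real.exp_add]
        simp
end

section
/- Let x, w ∈ ℝ^d, τ > 0, L₈ ≥ 0, L₉ > 0, and let b : ℝ^d → ℝ^d satisfy ⟨y, b(y)⟩ ≤ L₈ − L₉|y|² for all y. Suppose y ∈ ℝ^d satisfies the implicit relation y = x + τ b(y) + w. Then (1 + 2L₉τ)|y|² ≤ 2L₈τ + |x + w|². -/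
theorem stmt_9 (d : ℕ) (x w y : EuclideanSpace ℝ (Fin d))
    (τ L₈ L₉ : ℝ) (hτ : 0 < τ) (hL₈ : 0 ≤ L₈) (hL₉ : 0 < L₉)
    (b : EuclideanSpace ℝ (Fin d) → EuclideanSpace ℝ (Fin d))
    (hcoe : ∀ z, (inner ℝ z (b z) : ℝ) ≤ L₈ - L₉ * ‖z‖ ^ 2)
    (himp : y = x + τ • b y + w) :
    (1 + 2 * L₉ * τ) * ‖y‖ ^ 2 ≤ 2 * L₈ * τ + ‖x + w‖ ^ 2 := by
  have key : (inner ℝ y y : ℝ) = inner ℝ y (x + w) + τ * inner ℝ y (b y) := by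
    have e : x + τ • b y + w = (x + w) + τ • b y := add_right_comm x (τ • b y) w
    nth_rewrite 2 [himp]
    rw [e, inner_add_right, real_inner_smul_right]
  have h1 : (inner ℝ y y : ℝ) = ‖y‖ ^ 2 := real_inner_self_eq_norm_sq y
  have h2 : (inner ℝ y (x + w) : ℝ) ≤ (‖y‖ ^ 2 + ‖x + w‖ ^ 2) / 2 := by
    have := real_inner_le_norm y (x + w)
    nlinarith [sq_nonneg (‖y‖ - ‖x + w‖)]
  have h3 := hcoe y
  nlinarith [mul_le_mul_of_nonneg_left h3 hτ.le]
end
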